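/- If f : X → Y is a perfect (continuous, closed, with compact fibers) surjection of topological spaces, X is metrizable, and Y is completely metrizable, then X is completely metrizable. -/

import Mathlib

open Filter Topology Set

/-- Auxiliary: if `X` and `Y` are metric spaces, `Y` complete, and `f : X → Y` is continuous,
closed, with compact fibers, then `X` carries a complete metric inducing the same topology. -/
theorem aux_perfect_complete {X Y : Type*} [mX : MetricSpace X] [mY : MetricSpace Y]
    [CompleteSpace Y] (f : X → Y) (hc : Continuous f) (hcl : IsClosedMap f)
    (hcpt : ∀ y : Y, IsCompact (f ⁻¹' {y})) :
    ∃ m : MetricSpace X,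
      m.toUniformSpace.toTopologicalSpace = mX.toUniformSpace.toTopologicalSpace ∧
      @CompleteSpace X m.toUniformSpace := by
  have hemb : Topology.IsEmbedding (fun x : X => (x, f x)) := isEmbedding_graph hc
  have hdist : ∀ a b : X,
      @dist X (Topology.IsEmbedding.comapMetricSpace (fun x : X => (x, f x)) hemb).toDist a b
        = max (dist a b) (dist (f a) (f b)) := fun _ _ => rfl
  set D : MetricSpace X := hemb.comapMetricSpace _ with hDdef
  refine ⟨D, rfl, ?_⟩
  have hd1 : ∀ a b : X, dist a b ≤ @dist X D.toDist a b := by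
    intro a b
    rw [hdist a b]
  have hd2 : ∀ a b : X, dist (f a) (f b) ≤ @dist X D.toDist a b := by
    intro a b
    rw [hdist a b]
    exact le_max_right _ _
  have key : ∀ u : ℕ → X, @CauchySeq X ℕ D.toUniformSpace _ u →
      ∃ a, Tendsto u atTop (𝓝 a) := by
    intro u hu
    have huD := (@Metric.cauchySeq_iff X ℕ D.toPseudoMetricSpace _ _ u).1 hu
    have huY : CauchySeq (fun n => f (u n)) := by
      rw [Metric.cauchySeq_iff]
      intro ε hε
      obtain ⟨N, hN⟩ := huD ε hε
      exact ⟨N, fun a ha b hb => lt_of_le_of_lt (hd2 _ _) (hN a ha b hb)⟩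
    obtain ⟨y, hy⟩ := cauchySeq_tendsto_of_complete huY
    -- it suffices to find a cluster point of `u`
    suffices hcp : ∃ x : X, MapClusterPt x atTop u by
      obtain ⟨x, hx⟩ := hcp
      exact ⟨x, @le_nhds_of_cauchy_adhp X D.toUniformSpace _ x hu hx⟩
    by_contra hno
    push_neg at hno
    -- each tail image is closed
    have hclosed : ∀ m : ℕ, IsClosed (u '' Set.Ici m) := by
      intro m
      rw [← closure_subset_iff_isClosed]
      intro x hx
      by_contra hxnot
      refine hno x (mapClusterPt_iff_frequently.2 fun s hs => ?_)
      obtain ⟨ε, hε, hball⟩ := Metric.mem_nhds_iff.1 hs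
      rw [frequently_atTop]
      intro N
      have hpos : ∀ n, m ≤ n → 0 < dist x (u n) := by
        intro n hn
        rw [dist_pos]
        intro h
        exact hxnot ⟨n, hn, h.symm⟩
      have hδ : ∃ δ > 0, δ ≤ ε ∧ ∀ n ∈ Finset.Ico m N, δ ≤ dist x (u n) := by
        rcases (Finset.Ico m N).eq_empty_or_nonempty with h | h
        · exact ⟨ε, hε, le_refl _, by simp [h]⟩
        · refine ⟨min ε ((Finset.Ico m N).inf' h fun n => dist x (u n)), ?_,
            min_le_left _ _, fun n hn => le_trans (min_le_right _ _) (Finset.inf'_le _ hn)⟩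
          refine lt_min hε ?_
          rw [Finset.lt_inf'_iff]
          intro n hn
          exact hpos n (Finset.mem_Ico.1 hn).1
      obtain ⟨δ, hδ0, hδε, hδmin⟩ := hδ
      obtain ⟨b, ⟨n, hn, rfl⟩, hbx⟩ := Metric.mem_closure_iff.1 hx δ hδ0
      refine ⟨n, ?_, hball ?_⟩
      · by_contra hnN
        push_neg at hnN
        exact absurd hbx (not_lt.2 (hδmin n (Finset.mem_Ico.2 ⟨hn, hnN⟩)))
      · rw [Metric.mem_ball, dist_comm]
        exact lt_of_lt_of_le hbx hδε
    -- the fiber over y is hit by infinitely many terms of u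
    have hfreq : ∀ m : ℕ, ∃ n, m ≤ n ∧ f (u n) = y := by
      intro m
      have him : IsClosed (f '' (u '' Set.Ici m)) := hcl _ (hclosed m)
      have hymem : y ∈ f '' (u '' Set.Ici m) := by
        refine him.mem_of_tendsto hy (eventually_atTop.2 ⟨m, fun n hn => ?_⟩)
        exact ⟨u n, ⟨n, hn, rfl⟩, rfl⟩
      obtain ⟨x, ⟨n, hn, rfl⟩, hfx⟩ := hymem
      exact ⟨n, hn, hfx⟩
    -- get a cluster point in the compact fiber
    have hne : (Filter.map u atTop ⊓ 𝓟 (f ⁻¹' {y})).NeBot := by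
      rw [Filter.inf_principal_neBot_iff]
      intro U hU
      obtain ⟨m, hm⟩ := eventually_atTop.1 (mem_map.1 hU)
      obtain ⟨n, hn, hfn⟩ := hfreq m
      exact ⟨u n, hm n hn, hfn⟩
    obtain ⟨x, -, hx⟩ := @IsCompact.exists_clusterPt X _ _ (hcpt y)
      (Filter.map u atTop ⊓ 𝓟 (f ⁻¹' {y})) hne inf_le_right
    exact hno x (hx.mono inf_le_left)
  exact @Metric.complete_of_cauchySeq_tendsto X D.toPseudoMetricSpace key

/-- a perfect preimage of a completely metrizable space is completely metrizable
(for metrizable domains). -/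
theorem stmt5 {X Y : Type*} [tX : TopologicalSpace X] [tY : TopologicalSpace Y]
    [TopologicalSpace.MetrizableSpace X]
    (f : X → Y) (hc : Continuous f) (hcl : IsClosedMap f)
    (hcpt : ∀ y : Y, IsCompact (f ⁻¹' {y})) (hsurj : Function.Surjective f)
    (hY : ∃ mY : MetricSpace Y, mY.toUniformSpace.toTopologicalSpace = tY ∧
      @CompleteSpace Y mY.toUniformSpace) :
    ∃ mX : MetricSpace X, mX.toUniformSpace.toTopologicalSpace = tX ∧
      @CompleteSpace X mX.toUniformSpace := by
  obtain ⟨mY, hYt, hYc⟩ := hY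
  letI mX0 : MetricSpace X := TopologicalSpace.metrizableSpaceMetric X
  letI mY' : MetricSpace Y := mY.replaceTopology hYt.symm
  haveI hYc' : @CompleteSpace Y mY'.toUniformSpace := by
    rw [show mY' = mY from MetricSpace.replaceTopology_eq mY hYt.symm]
    exact hYc
  obtain ⟨m, hm, hcomp⟩ := @aux_perfect_complete X Y mX0 mY' hYc' f hc hcl hcpt
  exact ⟨m, hm, hcomp⟩
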